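/- CES fails Symmetry even for independent distributions: Let 0 < p < 1 and 0 < q < 1 with p ≠ q, and let D be the product distribution on ℝ² under which the first feature equals 2 with probability p and 1 with probability 1−p, independently of the second feature which equals 2 with probability q and 1 with probability 1−q. Let f(u, v) = u + v, which is symmetric in the two features. Then for the explicand (2,2) (which has equal values in both features), ces_1((2,2), D, f) = 1 − p and ces_2((2,2), D, f) = 1 − q; since p ≠ q, the two symmetric features receive unequal CES attributions. -/
import Mathlib

open scoped Classical

noncomputable def shapley {N : Type*} [Fintype N] [DecidableEq N]
    (v : Finset N → ℝ) (i : N) : ℝ :=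
  ∑ S ∈ (Finset.univ.erase i).powerset,
    ((S.card.factorial : ℝ) * ((Fintype.card N - S.card - 1).factorial) /
      (Fintype.card N).factorial) * (v (insert i S) - v S)


noncomputable def condExp {N : Type*} [Fintype N] [DecidableEq N]
    (T : Finset (N → ℝ)) (p : (N → ℝ) → ℝ) (f : (N → ℝ) → ℝ)
    (x : N → ℝ) (S : Finset N) : ℝ :=
  (∑ t ∈ T.filter fun t => ∀ j ∈ S, t j = x j, p t * f t) /
  (∑ t ∈ T.filter fun t => ∀ j ∈ S, t j = x j, p t)

noncomputable def ces {N : Type*} [Fintype N] [DecidableEq N]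
    (T : Finset (N → ℝ)) (p : (N → ℝ) → ℝ) (x : N → ℝ)
    (f : (N → ℝ) → ℝ) (i : N) : ℝ :=
  shapley (fun S => condExp T p f x S) i

section Aux

variable (p q : ℝ)

noncomputable def myT : Finset (Fin 2 → ℝ) := {![1,1], ![1,2], ![2,1], ![2,2]}

noncomputable def myP : (Fin 2 → ℝ) → ℝ :=
  fun t => (if t 0 = 2 then p else 1 - p) * (if t 1 = 2 then q else 1 - q)

lemma hne1 : (![1,1] : Fin 2 → ℝ) ≠ ![1,2] := by
  intro h; have := congrFun h 1; norm_num at this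
lemma hne2 : (![1,1] : Fin 2 → ℝ) ≠ ![2,1] := by
  intro h; have := congrFun h 0; norm_num at this
lemma hne3 : (![1,1] : Fin 2 → ℝ) ≠ ![2,2] := by
  intro h; have := congrFun h 0; norm_num at this
lemma hne4 : (![1,2] : Fin 2 → ℝ) ≠ ![2,1] := by
  intro h; have := congrFun h 0; norm_num at this
lemma hne5 : (![1,2] : Fin 2 → ℝ) ≠ ![2,2] := by
  intro h; have := congrFun h 0; norm_num at this
lemma hne6 : (![2,1] : Fin 2 → ℝ) ≠ ![2,2] := by
  intro h; have := congrFun h 1; norm_num at this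

lemma condExp_empty :
    condExp (myT) (myP p q) (fun t => t 0 + t 1) ![2,2] ∅ = 2 + p + q := by
  norm_num [condExp, myT, myP, Finset.filter_insert, Finset.sum_insert, Finset.mem_insert,
    Finset.filter_singleton, hne1, hne2, hne3, hne4, hne5, hne6]
  rw [show (1-p)*(1-q)*2 + ((1-p)*q*3 + (p*(1-q)*3 + p*q*4)) = 2 + p + q by ring,
    show (1-p)*(1-q) + ((1-p)*q + (p*(1-q) + p*q)) = 1 by ring]
  simp

lemma condExp_zero (hp0 : 0 < p) :
    condExp (myT) (myP p q) (fun t => t 0 + t 1) ![2,2] {0} = 3 + q := by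
  norm_num [condExp, myT, myP, Finset.filter_insert, Finset.sum_insert, Finset.mem_insert,
    Finset.filter_singleton, hne1, hne2, hne3, hne4, hne5, hne6]
  rw [show p*(1-q)*3 + p*q*4 = p * (3 + q) by ring,
    show p*(1-q) + p*q = p by ring]
  field_simp

lemma condExp_one (hq0 : 0 < q) :
    condExp (myT) (myP p q) (fun t => t 0 + t 1) ![2,2] {1} = 3 + p := by
  norm_num [condExp, myT, myP, Finset.filter_insert, Finset.sum_insert, Finset.mem_insert,
    Finset.filter_singleton, hne1, hne2, hne3, hne4, hne5, hne6]
  rw [show (1-p)*q*3 + p*q*4 = q * (3 + p) by ring,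
    show (1-p)*q + p*q = q by ring]
  field_simp

lemma condExp_both (hp0 : 0 < p) (hq0 : 0 < q) :
    condExp (myT) (myP p q) (fun t => t 0 + t 1) ![2,2] {0, 1} = 4 := by
  norm_num [condExp, myT, myP, Finset.filter_insert, Finset.sum_insert, Finset.mem_insert,
    Finset.filter_singleton, hne1, hne2, hne3, hne4, hne5, hne6]
  rw [show p*q*4 = (p*q) * 4 by ring]
  field_simp

end Aux

theorem ces_fails_symmetry (p q : ℝ) (hp0 : 0 < p) (hp1 : p < 1)
    (hq0 : 0 < q) (hq1 : q < 1) (hpq : p ≠ q) :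
    ces ({![1,1], ![1,2], ![2,1], ![2,2]} : Finset (Fin 2 → ℝ))
        (fun t => (if t 0 = 2 then p else 1 - p) * (if t 1 = 2 then q else 1 - q))
        ![2,2] (fun t => t 0 + t 1) 0 = 1 - p ∧
    ces ({![1,1], ![1,2], ![2,1], ![2,2]} : Finset (Fin 2 → ℝ))
        (fun t => (if t 0 = 2 then p else 1 - p) * (if t 1 = 2 then q else 1 - q))
        ![2,2] (fun t => t 0 + t 1) 1 = 1 - q ∧
    ces ({![1,1], ![1,2], ![2,1], ![2,2]} : Finset (Fin 2 → ℝ))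
        (fun t => (if t 0 = 2 then p else 1 - p) * (if t 1 = 2 then q else 1 - q))
        ![2,2] (fun t => t 0 + t 1) 0 ≠
      ces ({![1,1], ![1,2], ![2,1], ![2,2]} : Finset (Fin 2 → ℝ))
        (fun t => (if t 0 = 2 then p else 1 - p) * (if t 1 = 2 then q else 1 - q))
        ![2,2] (fun t => t 0 + t 1) 1 := by
  have e0 := condExp_empty p q
  have ez := condExp_zero p q hp0
  have eo := condExp_one p q hq0
  have eb := condExp_both p q hp0 hq0
  have hT : ({![1,1], ![1,2], ![2,1], ![2,2]} : Finset (Fin 2 → ℝ)) = myT := rfl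
  have hPfun : (fun t : Fin 2 → ℝ =>
      (if t 0 = 2 then p else 1 - p) * (if t 1 = 2 then q else 1 - q)) = myP p q := rfl
  have hP0 : (Finset.univ.erase (0:Fin 2)).powerset = ({∅, {1}} : Finset (Finset (Fin 2))) := by
    decide
  have hP1 : (Finset.univ.erase (1:Fin 2)).powerset = ({∅, {0}} : Finset (Finset (Fin 2))) := by
    decide
  have hc0 : ces (myT) (myP p q) ![2,2] (fun t => t 0 + t 1) 0 = 1 - p := by
    rw [ces, shapley, hP0, Finset.sum_pair (by decide : (∅ : Finset (Fin 2)) ≠ {1})]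
    have hi1 : insert (0:Fin 2) (∅ : Finset (Fin 2)) = {0} := rfl
    have hi2 : insert (0:Fin 2) ({1} : Finset (Fin 2)) = {0, 1} := rfl
    rw [hi1, hi2]
    simp only [e0, ez, eo, eb]
    norm_num
    ring
  have hc1 : ces (myT) (myP p q) ![2,2] (fun t => t 0 + t 1) 1 = 1 - q := by
    rw [ces, shapley, hP1, Finset.sum_pair (by decide : (∅ : Finset (Fin 2)) ≠ {0})]
    have hi1 : insert (1:Fin 2) (∅ : Finset (Fin 2)) = {1} := rfl
    have hi2 : insert (1:Fin 2) ({0} : Finset (Fin 2)) = {1, 0} := rfl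
    have hsw : ({1, 0} : Finset (Fin 2)) = {0, 1} := by decide
    rw [hi1, hi2, hsw]
    simp only [e0, ez, eo, eb]
    norm_num
    ring
  rw [hT, hPfun, hc0, hc1]
  refine ⟨rfl, rfl, ?_⟩
  intro h
  exact hpq (by linarith)
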